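/- The lattice points of the restricted Birkhoff polytope B_n^k (the n×n doubly stochastic matrices with every monotone lattice path sum from (1,1) to (n,n) at most k) are exactly the permutation matrices of permutations in S_n whose longest increasing subsequence has length at most k. -/

import Mathlib

open scoped BigOperators

/-- A monotone lattice path in the `n × n` grid from `(0,0)` to `(n-1,n-1)` (0-indexed),
with `2n-1` entries `p 0, p 1, …, p (2n-2)`, each step moving down or right. -/
def IsLatticePath (n : ℕ) (p : ℕ → ℕ × ℕ) : Prop :=
  p 0 = (0, 0) ∧ p (2 * n - 2) = (n - 1, n - 1) ∧
    ∀ i, i < 2 * n - 2 →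
      p (i + 1) = ((p i).1 + 1, (p i).2) ∨ p (i + 1) = ((p i).1, (p i).2 + 1)

/-- Entry of a matrix at a ℕ-indexed position (0 outside the index range). -/
def ent {n : ℕ} (X : Matrix (Fin n) (Fin n) ℝ) (q : ℕ × ℕ) : ℝ :=
  if h : q.1 < n ∧ q.2 < n then X ⟨q.1, h.1⟩ ⟨q.2, h.2⟩ else 0

/-- Sum of matrix entries along a lattice path. -/
def pathSum {n : ℕ} (X : Matrix (Fin n) (Fin n) ℝ) (p : ℕ → ℕ × ℕ) : ℝ :=
  ∑ i ∈ Finset.range (2 * n - 1), ent X (p i)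

/-- Membership in the restricted Birkhoff polytope `B_n^k`: doubly stochastic with
all monotone lattice path sums at most `k`. -/
def InRestrictedBirkhoff (n k : ℕ) (X : Matrix (Fin n) (Fin n) ℝ) : Prop :=
  (∀ i j, 0 ≤ X i j) ∧ (∀ i, ∑ j, X i j = 1) ∧ (∀ j, ∑ i, X i j = 1) ∧
    ∀ p : ℕ → ℕ × ℕ, IsLatticePath n p → pathSum X p ≤ k

/-- A real matrix with all entries integers. -/
def IsIntegerMatrix {n : ℕ} (X : Matrix (Fin n) (Fin n) ℝ) : Prop :=
  ∀ i j, ∃ m : ℤ, X i j = (m : ℝ)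

lemma path_coord_sum {n : ℕ} {p : ℕ → ℕ × ℕ} (hp : IsLatticePath n p) :
    ∀ i, i ≤ 2*n-2 → (p i).1 + (p i).2 = i := by
  intro i
  induction i with
  | zero => intro _; simp [hp.1]
  | succ i ih =>
    intro h
    have hih := ih (by omega)
    rcases hp.2.2 i (by omega) with h' | h' <;> rw [h'] <;> simp only <;> omega

lemma path_mono {n : ℕ} {p : ℕ → ℕ × ℕ} (hp : IsLatticePath n p) :
    ∀ d i, i + d ≤ 2*n-2 → (p i).1 ≤ (p (i+d)).1 ∧ (p i).2 ≤ (p (i+d)).2 := by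
  intro d
  induction d with
  | zero => simp
  | succ d ih =>
    intro i h
    have h1 := ih i (by omega)
    have : i + (d+1) = (i+d)+1 := rfl
    rw [this]
    rcases hp.2.2 (i+d) (by omega) with h' | h' <;> rw [h'] <;> simp only <;> omega

lemma ent_nonneg {n : ℕ} {X : Matrix (Fin n) (Fin n) ℝ} (h0 : ∀ i j, 0 ≤ X i j)
    (q : ℕ × ℕ) : 0 ≤ ent X q := by
  unfold ent; split
  · exact h0 _ _
  · exact le_rfl
lemma path_through_chain {n : ℕ} (hn : 1 ≤ n) (w : Equiv.Perm (Fin n)) (s : Finset (Fin n))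
    (hch : ∀ a ∈ s, ∀ b ∈ s, a < b → w a < w b) :
    ∃ p : ℕ → ℕ × ℕ, IsLatticePath n p ∧
      ∀ a ∈ s, p ((a:ℕ) + (w a:ℕ)) = ((a:ℕ), ((w a:ℕ))) := by
  classical
  set C : Finset (ℕ × ℕ) :=
    insert (2*n-2, n-1) (s.image fun a => (a.val + (w a).val, a.val)) with hC
  set r : ℕ → ℕ := fun i => C.sup fun q => q.2 - (q.1 - i) with hrdef
  have hqle : ∀ q ∈ C, q.2 ≤ q.1 ∧ q.1 ≤ 2*n-2 ∧ q.2 ≤ n-1 ∧ q.1 - q.2 ≤ n-1 := by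
    intro q hq
    rcases Finset.mem_insert.1 hq with h | h
    · subst h; omega
    · obtain ⟨a, _, rfl⟩ := Finset.mem_image.1 h
      have h1 := a.isLt; have h2 := (w a).isLt
      simp only
      omega
  have hLip : ∀ q ∈ C, ∀ q' ∈ C, q'.2 - (q'.1 - q.1) ≤ q.2 := by
    intro q hq q' hq'
    rcases Finset.mem_insert.1 hq with h | h <;>
      rcases Finset.mem_insert.1 hq' with h' | h'
    · subst h; subst h'; omega
    · obtain ⟨a, _, rfl⟩ := Finset.mem_image.1 h'
      subst h
      have h1 := a.isLt; have h2 := (w a).isLt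
      simp only; omega
    · obtain ⟨a, _, rfl⟩ := Finset.mem_image.1 h
      subst h'
      have h1 := a.isLt; have h2 := (w a).isLt
      simp only; omega
    · obtain ⟨a, ha, rfl⟩ := Finset.mem_image.1 h
      obtain ⟨b, hb, rfl⟩ := Finset.mem_image.1 h'
      simp only
      have h1 := a.isLt; have h2 := (w a).isLt
      have h3 := b.isLt; have h4 := (w b).isLt
      rcases lt_trichotomy a b with hab | hab | hab
      · have := hch a ha b hb hab
        have hab' : (a:ℕ) < b := hab
        have hw' : (w a : ℕ) < w b := this
        omega
      · subst hab; omega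
      · have := hch b hb a ha hab
        have hab' : (b:ℕ) < a := hab
        have hw' : (w b : ℕ) < w a := this
        omega
  have hrq : ∀ q ∈ C, r q.1 = q.2 := by
    intro q hq
    refine le_antisymm (Finset.sup_le fun q' hq' => hLip q hq q' hq') ?_
    have := Finset.le_sup (f := fun q' : ℕ × ℕ => q'.2 - (q'.1 - q.1)) hq
    simpa using this
  have hr0 : r 0 = 0 := by
    refine Nat.le_zero.1 (Finset.sup_le fun q hq => ?_)
    have := (hqle q hq).1; omega
  have hmono1 : ∀ i, r i ≤ r (i+1) :=
    fun i => Finset.sup_mono_fun fun q _ => by omega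
  have hstep : ∀ i, r (i+1) ≤ r i + 1 := by
    intro i
    refine Finset.sup_le fun q hq => ?_
    have h1 : q.2 - (q.1 - (i+1)) ≤ (q.2 - (q.1 - i)) + 1 := by omega
    exact h1.trans (Nat.add_le_add_right (Finset.le_sup (f := fun q : ℕ × ℕ => q.2 - (q.1 - i)) hq) 1)
  have hri : ∀ i, r i ≤ i := by
    intro i
    refine Finset.sup_le fun q hq => ?_
    have := (hqle q hq).1; omega
  have hend : ((2*n-2, n-1) : ℕ × ℕ) ∈ C := Finset.mem_insert_self _ _
  have hrend : r (2*n-2) = n-1 := hrq _ hend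
  refine ⟨fun i => (r i, i - r i), ⟨?_, ?_, ?_⟩, ?_⟩
  · simp [hr0]
  · dsimp only
    rw [hrend]
    have := hri (2*n-2)
    exact Prod.ext rfl (by simp; omega)
  · intro i _
    dsimp only
    have h1 := hmono1 i
    have h2 := hstep i
    have h3 := hri i
    have : r (i+1) = r i + 1 ∨ r (i+1) = r i := by omega
    rcases this with h | h
    · left; rw [h]; exact Prod.ext rfl (by omega)
    · right; rw [h]; exact Prod.ext rfl (by omega)
  · intro a ha
    dsimp only
    have hqmem : ((a:ℕ) + (w a:ℕ), (a:ℕ)) ∈ C :=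
      Finset.mem_insert_of_mem (Finset.mem_image_of_mem _ ha)
    have := hrq _ hqmem
    simp only at this
    rw [this]
    exact Prod.ext rfl (by simp)
lemma perm_extract {n : ℕ} (X : Matrix (Fin n) (Fin n) ℝ)
    (h0 : ∀ i j, 0 ≤ X i j) (hr : ∀ i, ∑ j, X i j = 1) (hc : ∀ j, ∑ i, X i j = 1)
    (hint : ∀ i j, ∃ m : ℤ, X i j = (m : ℝ)) :
    ∃ w : Equiv.Perm (Fin n), ∀ i j, X i j = if w i = j then 1 else 0 := by
  have h01 : ∀ i j, X i j = 0 ∨ X i j = 1 := by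
    intro i j
    obtain ⟨m, hm⟩ := hint i j
    have h1 : X i j ≤ 1 := by
      rw [← hr i]
      exact Finset.single_le_sum (fun j' _ => h0 i j') (Finset.mem_univ j)
    have hm0 : (0:ℝ) ≤ m := hm ▸ h0 i j
    have hm1 : (m:ℝ) ≤ 1 := hm ▸ h1
    have : m = 0 ∨ m = 1 := by
      have hA : (0:ℤ) ≤ m := by exact_mod_cast hm0
      have hB : m ≤ 1 := by exact_mod_cast hm1
      omega
    rcases this with h | h <;> [left; right] <;> simp [hm, h]
  have hex : ∀ i, ∃ j, X i j = 1 := by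
    intro i
    by_contra hcon
    push_neg at hcon
    have : ∑ j, X i j = 0 := Finset.sum_eq_zero (fun j _ => (h01 i j).resolve_right (hcon j))
    rw [hr i] at this; norm_num at this
  choose f hf using hex
  have hinj : Function.Injective f := by
    intro i1 i2 he
    by_contra hne
    have h2 : (2:ℝ) ≤ ∑ i, X i (f i1) := by
      have : ∑ i ∈ ({i1, i2} : Finset (Fin n)), X i (f i1) = 2 := by
        rw [Finset.sum_pair hne, hf i1]
        have : X i2 (f i1) = 1 := by rw [he]; exact hf i2
        rw [this]; norm_num
      rw [← this]
      exact Finset.sum_le_sum_of_subset_of_nonneg (Finset.subset_univ _)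
        (fun i _ _ => h0 i (f i1))
    rw [hc (f i1)] at h2; norm_num at h2
  refine ⟨Equiv.ofBijective f (Finite.injective_iff_bijective.1 hinj), fun i j => ?_⟩
  simp only [Equiv.ofBijective_apply]
  by_cases hj : f i = j
  · subst hj; simp [hf i]
  · simp only [hj, if_false]
    have hrow : ∑ j' ∈ (Finset.univ.erase (f i)), X i j' = 0 := by
      have := Finset.add_sum_erase Finset.univ (X i) (Finset.mem_univ (f i))
      rw [hr i, hf i] at this
      linarith
    have := (Finset.sum_eq_zero_iff_of_nonneg (fun j' _ => h0 i j')).1 hrow j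
      (Finset.mem_erase.2 ⟨fun h => hj h.symm, Finset.mem_univ j⟩)
    exact this

/-- The lattice points of `B_n^k` are exactly the permutation matrices of permutations
whose longest increasing subsequence has length at most `k`. -/
theorem latticePoints_restrictedBirkhoff (n k : ℕ) (hk : 1 ≤ k) (hkn : k ≤ n)
    (X : Matrix (Fin n) (Fin n) ℝ) :
    (InRestrictedBirkhoff n k X ∧ IsIntegerMatrix X) ↔
      ∃ w : Equiv.Perm (Fin n),
        (∀ i j, X i j = if w i = j then 1 else 0) ∧
        ∀ s : Finset (Fin n), (∀ a ∈ s, ∀ b ∈ s, a < b → w a < w b) → s.card ≤ k := by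
  classical
  have hn : 1 ≤ n := hk.trans hkn
  constructor
  · rintro ⟨⟨h0, hrow, hcol, hpath⟩, hint⟩
    obtain ⟨w, hw⟩ := perm_extract X h0 hrow hcol hint
    refine ⟨w, hw, fun s hch => ?_⟩
    obtain ⟨p, hp, hpt⟩ := path_through_chain hn w s hch
    have hinj : ∀ a ∈ s, ∀ b ∈ s,
        (a:ℕ) + (w a:ℕ) = (b:ℕ) + (w b:ℕ) → a = b := by
      intro a ha b hb hab
      rcases lt_trichotomy a b with h | h | h
      · have h2 := hch a ha b hb h
        have h3 : (a:ℕ) < b := h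
        have h4 : (w a:ℕ) < w b := h2
        omega
      · exact h
      · have h2 := hch b hb a ha h
        have h3 : (b:ℕ) < a := h
        have h4 : (w b:ℕ) < w a := h2
        omega
    have hsub : s.image (fun a : Fin n => a.val + (w a).val) ⊆ Finset.range (2*n-1) := by
      intro i hi
      obtain ⟨a, ha, rfl⟩ := Finset.mem_image.1 hi
      have := a.isLt; have := (w a).isLt
      exact Finset.mem_range.2 (by omega)
    have hone : ∀ a ∈ s, ent X (p ((a:ℕ) + (w a:ℕ))) = 1 := by
      intro a ha
      rw [hpt a ha]
      unfold ent
      rw [dif_pos ⟨a.isLt, (w a).isLt⟩]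
      simp only [Fin.eta]
      rw [hw]
      simp
    have hge : (s.card : ℝ) ≤ pathSum X p := by
      have h1 : ∑ i ∈ s.image (fun a : Fin n => a.val + (w a).val), ent X (p i) ≤ pathSum X p :=
        Finset.sum_le_sum_of_subset_of_nonneg hsub (fun i _ _ => ent_nonneg h0 _)
      have h2 : ∑ i ∈ s.image (fun a : Fin n => a.val + (w a).val), ent X (p i)
          = ∑ a ∈ s, ent X (p ((a:ℕ) + (w a:ℕ))) := Finset.sum_image hinj
      have h3 : ∑ a ∈ s, ent X (p ((a:ℕ) + (w a:ℕ))) = s.card := by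
        rw [Finset.sum_congr rfl hone]
        simp
      rw [h2, h3] at h1
      exact h1
    have := hge.trans (hpath p hp)
    exact_mod_cast this
  · rintro ⟨w, hw, hLIS⟩
    refine ⟨⟨?_, ?_, ?_, ?_⟩, ?_⟩
    · intro i j; rw [hw]; split <;> norm_num
    · intro i
      simp only [hw]
      rw [Finset.sum_ite_eq Finset.univ (w i) (fun _ => (1:ℝ))]
      simp
    · intro j
      have : ∀ i : Fin n, (if w i = j then (1:ℝ) else 0) = if i = w.symm j then 1 else 0 := by
        intro i
        congr 1
        simp [Equiv.eq_symm_apply, eq_comm]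
      simp only [hw, this]
      rw [Finset.sum_ite_eq' Finset.univ (w.symm j) (fun _ => (1:ℝ))]
      simp
    · intro p hp
      have hcs := path_coord_sum hp
      have hmono := path_mono hp
      set T := (Finset.range (2*n-1)).filter (fun i => ent X (p i) = 1) with hT
      have hent01 : ∀ i, ent X (p i) = 0 ∨ ent X (p i) = 1 := by
        intro i
        unfold ent
        split
        · rw [hw]; split
          · right; rfl
          · left; rfl
        · left; rfl
      have hps : pathSum X p = T.card := by
        unfold pathSum
        rw [← Finset.sum_filter_add_sum_filter_not (Finset.range (2*n-1))
          (fun i => ent X (p i) = 1)]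
        have hB : ∑ i ∈ (Finset.range (2*n-1)).filter (fun i => ¬ ent X (p i) = 1),
            ent X (p i) = 0 := by
          refine Finset.sum_eq_zero fun i hi => ?_
          exact (hent01 i).resolve_right (Finset.mem_filter.1 hi).2
        have hA : ∑ i ∈ T, ent X (p i) = T.card := by
          rw [Finset.sum_congr rfl (fun i hi => (Finset.mem_filter.1 hi).2)]
          simp
          rw [hT]
        rw [hA, hB, add_zero]
      have hTfact : ∀ i ∈ T, i ≤ 2*n-2 ∧ ∃ (h1 : (p i).1 < n) (h2 : (p i).2 < n),
          w ⟨(p i).1, h1⟩ = ⟨(p i).2, h2⟩ := by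
        intro i hi
        obtain ⟨hir, hie⟩ := Finset.mem_filter.1 hi
        have hi2 : i ≤ 2*n-2 := by have := Finset.mem_range.1 hir; omega
        refine ⟨hi2, ?_⟩
        unfold ent at hie
        split at hie
        case isTrue h =>
          refine ⟨h.1, h.2, ?_⟩
          rw [hw] at hie
          split at hie
          case isTrue h' => exact h'
          case isFalse => norm_num at hie
        case isFalse => norm_num at hie
      set ρ : ℕ → Fin n := fun i => ⟨min (p i).1 (n-1), by omega⟩ with hρ
      have hTw : ∀ i ∈ T, ((ρ i : ℕ) = (p i).1 ∧ ((w (ρ i) : ℕ) = (p i).2)) := by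
        intro i hi
        obtain ⟨hi2, h1, h2, hww⟩ := hTfact i hi
        have hv : (ρ i : ℕ) = (p i).1 := by simp only [hρ]; omega
        refine ⟨hv, ?_⟩
        have : ρ i = ⟨(p i).1, h1⟩ := Fin.ext hv
        rw [this, hww]
      have hinj : ∀ i ∈ T, ∀ j ∈ T, ρ i = ρ j → i = j := by
        intro i hi j hj hij
        obtain ⟨hi2, _⟩ := hTfact i hi
        obtain ⟨hj2, _⟩ := hTfact j hj
        obtain ⟨hv1, hv2⟩ := hTw i hi
        obtain ⟨hu1, hu2⟩ := hTw j hj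
        have e1 : (p i).1 = (p j).1 := by rw [← hv1, ← hu1, hij]
        have e2 : (p i).2 = (p j).2 := by rw [← hv2, ← hu2, hij]
        have := hcs i hi2
        have := hcs j hj2
        omega
      have hchain : ∀ a ∈ T.image ρ, ∀ b ∈ T.image ρ, a < b → w a < w b := by
        intro a ha b hb hab
        obtain ⟨i, hi, rfl⟩ := Finset.mem_image.1 ha
        obtain ⟨j, hj, rfl⟩ := Finset.mem_image.1 hb
        obtain ⟨hi2, _⟩ := hTfact i hi
        obtain ⟨hj2, _⟩ := hTfact j hj
        obtain ⟨hv1, hv2⟩ := hTw i hi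
        obtain ⟨hu1, hu2⟩ := hTw j hj
        have hij : i ≤ j := by
          by_contra hcon
          push_neg at hcon
          obtain ⟨hm1, _⟩ := hmono (i - j) j (by omega)
          rw [show j + (i-j) = i by omega] at hm1
          have : (ρ i : ℕ) < (ρ j : ℕ) := hab
          omega
        obtain ⟨_, hm2⟩ := hmono (j - i) i (by omega)
        rw [show i + (j-i) = j by omega] at hm2
        have hle : (w (ρ i) : ℕ) ≤ (w (ρ j) : ℕ) := by omega
        have hne : w (ρ i) ≠ w (ρ j) := by
          intro he
          exact absurd (w.injective he ▸ rfl : ρ i = ρ j)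
            (by intro hh; rw [hh] at hab; exact lt_irrefl _ hab)
        have hlt : (w (ρ i) : ℕ) < (w (ρ j) : ℕ) :=
          lt_of_le_of_ne hle (fun hh => hne (Fin.ext hh))
        exact Fin.lt_def.2 hlt
      have hcard : T.card ≤ k := by
        have := hLIS (T.image ρ) hchain
        rwa [Finset.card_image_of_injOn hinj] at this
      rw [hps]
      exact_mod_cast hcard
    · intro i j
      refine ⟨if w i = j then 1 else 0, ?_⟩
      rw [hw]; split <;> norm_num
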